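/- Let μ ∈ ℝ^k, let Σ be a symmetric positive definite k×k real matrix, let 𝟏 ∈ ℝ^k be the all-ones vector, and let A > 0, c > 0, W > 0, R ∈ ℝ, r ∈ ℝ. Then the function v ↦ ∫ −A·exp( −cW ( R + ⟨v, x − r·𝟏⟩ ) ) dN_k(μ,Σ)(x) on ℝ^k attains its supremum, the supremum is attained uniquely at v* = (cW)^{−1} Σ^{−1} (μ − r·𝟏), and the maximal value equals −A·exp( −cWR − (1/2)(μ − r·𝟏)ᵀ Σ^{−1} (μ − r·𝟏) ). -/

import Mathlib

open MeasureTheory Matrix Real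
open scoped NNReal ENNReal

/-- The `k`-dimensional Gaussian probability measure `N_k(μ, S)` on `ℝ^k`, defined via its
Lebesgue density `((2π)^k det S)^{-1/2} exp(-(x-μ)ᵀ S⁻¹ (x-μ)/2)`. -/
noncomputable def multivariateGaussian {k : ℕ} (μ : Fin k → ℝ)
    (S : Matrix (Fin k) (Fin k) ℝ) : Measure (Fin k → ℝ) :=
  volume.withDensity fun x =>
    ENNReal.ofReal
      (Real.exp (-((x - μ) ⬝ᵥ (S⁻¹ *ᵥ (x - μ))) / 2) / Real.sqrt ((2 * π) ^ k * S.det))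

lemma gauss1d (a : ℝ) : ∫ x : ℝ, rexp (a * x - x ^ 2 / 2) = Real.sqrt (2 * π) * rexp (a ^ 2 / 2) := by
  have h := integral_cexp_quadratic (b := -(1/2 : ℂ)) (by norm_num) (a : ℂ) 0
  have h1 : ∀ x : ℝ, Complex.exp (-(1/2 : ℂ) * (x:ℝ) ^ 2 + (a:ℂ) * x + 0)
      = ((rexp (a * x - x ^ 2 / 2) : ℝ) : ℂ) := by
    intro x
    rw [Complex.ofReal_exp]
    congr 1
    push_cast
    ring
  simp_rw [h1] at h
  rw [show (∫ x:ℝ, ((rexp (a*x - x^2/2):ℝ):ℂ)) = ((∫ x:ℝ, rexp (a*x - x^2/2) : ℝ):ℂ) from integral_ofReal] at h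
  have h2 : ((π : ℂ) / - -(1/2 : ℂ)) ^ (1/2 : ℂ) * Complex.exp (0 - (a:ℂ)^2 / (4 * -(1/2 : ℂ)))
      = ((Real.sqrt (2 * π) * rexp (a ^ 2 / 2) : ℝ) : ℂ) := by
    have e1 : ((π : ℂ) / - -(1/2 : ℂ)) = ((2 * π : ℝ) : ℂ) := by push_cast; ring
    have e2 : ((1:ℂ)/2) = ((1/2 : ℝ) : ℂ) := by norm_num
    have e3 : (0 - (a:ℂ)^2 / (4 * -(1/2 : ℂ))) = ((a ^ 2 / 2 : ℝ) : ℂ) := by push_cast; ring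
    rw [e1, e3, e2, ← Complex.ofReal_cpow (by positivity), ← Complex.ofReal_exp,
      ← Complex.ofReal_mul]
    rw [← Real.sqrt_eq_rpow]
  rw [h2] at h
  exact_mod_cast h

lemma gaussK {k : ℕ} (s : Fin k → ℝ) :
    ∫ y : Fin k → ℝ, rexp (s ⬝ᵥ y - y ⬝ᵥ y / 2)
      = Real.sqrt ((2 * π) ^ k) * rexp (s ⬝ᵥ s / 2) := by
  have h1 : ∀ y : Fin k → ℝ, rexp (s ⬝ᵥ y - y ⬝ᵥ y / 2)
      = ∏ i, rexp (s i * y i - (y i) ^ 2 / 2) := by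
    intro y
    rw [← Real.exp_sum]
    congr 1
    simp only [dotProduct, Finset.sum_div, ← Finset.sum_sub_distrib]
    exact Finset.sum_congr rfl fun i _ => by ring
  simp_rw [h1]
  rw [integral_fintype_prod_volume_eq_prod (f := fun (i : Fin k) (x : ℝ) => rexp (s i * x - x ^ 2 / 2))]
  simp_rw [gauss1d]
  rw [Finset.prod_mul_distrib, Finset.prod_const, ← Real.exp_sum, Finset.card_univ,
    Fintype.card_fin]
  have e1 : Real.sqrt (2 * π) ^ k = Real.sqrt ((2 * π) ^ k) := by
    rw [Real.sqrt_eq_rpow, Real.sqrt_eq_rpow, ← Real.rpow_natCast ((2*π) ^ ((1:ℝ)/2)) k,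
      ← Real.rpow_mul (by positivity), ← Real.rpow_natCast (2*π) k,
      ← Real.rpow_mul (by positivity)]
    congr 1
    ring
  have e2 : ∑ i : Fin k, s i ^ 2 / 2 = s ⬝ᵥ s / 2 := by
    rw [dotProduct, Finset.sum_div]
    exact Finset.sum_congr rfl fun i _ => by ring
  rw [e1, e2]

lemma cont_dot {k : ℕ} {f g : (Fin k → ℝ) → (Fin k → ℝ)} (hf : Continuous f)
    (hg : Continuous g) : Continuous fun x => f x ⬝ᵥ g x := by
  show Continuous fun x => ∑ i, f x i * g x i
  exact continuous_finset_sum _ fun i _ =>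
    (((continuous_apply i).comp hf).mul ((continuous_apply i).comp hg))

lemma cont_mulVec {k : ℕ} (M : Matrix (Fin k) (Fin k) ℝ) :
    Continuous fun x : Fin k → ℝ => M *ᵥ x :=
  LinearMap.continuous_of_finiteDimensional (Matrix.mulVecLin M)

lemma integral_comp_mulVec {k : ℕ} {B : Matrix (Fin k) (Fin k) ℝ} (hB : B.det ≠ 0)
    {F : (Fin k → ℝ) → ℝ} (hF : Continuous F) :
    ∫ x, F x = |B.det| * ∫ y, F (B *ᵥ y) := by
  have h1 : ∫ y, F (B *ᵥ y) = ∫ x, F x ∂(Measure.map (Matrix.toLin' B) volume) := by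
    rw [integral_map (Matrix.toLin' B).continuous_of_finiteDimensional.aemeasurable
      hF.aestronglyMeasurable]
    simp_rw [Matrix.toLin'_apply]
  rw [h1, Real.map_matrix_volume_pi_eq_smul_volume_pi hB, integral_smul_measure,
    ENNReal.toReal_ofReal (abs_nonneg _), smul_eq_mul, ← mul_assoc, abs_inv,
    mul_inv_cancel₀ (abs_ne_zero.2 hB), one_mul]

open scoped MatrixOrder in
lemma mgf {k : ℕ} (μ : Fin k → ℝ) (S : Matrix (Fin k) (Fin k) ℝ) (hS : S.PosDef)
    (t : Fin k → ℝ) :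
    ∫ x, rexp (t ⬝ᵥ x) ∂(multivariateGaussian μ S)
      = rexp (t ⬝ᵥ μ + t ⬝ᵥ (S *ᵥ t) / 2) := by
  have hdetS : 0 < S.det := hS.det_pos
  set Z : ℝ := Real.sqrt ((2 * π) ^ k * S.det) with hZdef
  have hZ : 0 < Z := Real.sqrt_pos.2 (by positivity)
  set B : Matrix (Fin k) (Fin k) ℝ := CFC.sqrt S with hBdef
  have hBsd : B.PosSemidef := (CFC.sqrt_nonneg S).posSemidef
  have hBB : B * B = S := CFC.sqrt_mul_sqrt_self S hS.posSemidef.nonneg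
  have hBt : Bᵀ = B := by
    rw [← Matrix.conjTranspose_eq_transpose_of_trivial]; exact hBsd.1
  have hSt : Sᵀ = S := by
    rw [← Matrix.conjTranspose_eq_transpose_of_trivial]; exact hS.1
  have hdetB : B.det * B.det = S.det := by rw [← det_mul, hBB]
  have hdetB0 : B.det ≠ 0 := by
    intro h; rw [h, mul_zero] at hdetB; exact hdetS.ne hdetB
  have hSinvT : S⁻¹ᵀ = S⁻¹ := by rw [transpose_nonsing_inv, hSt]
  have hBSB : B * S⁻¹ * B = 1 := by
    have hu : IsUnit B.det := isUnit_iff_ne_zero.2 hdetB0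
    rw [← hBB, Matrix.mul_inv_rev]
    calc B * (B⁻¹ * B⁻¹) * B = (B * B⁻¹) * (B⁻¹ * B) := by
          simp only [Matrix.mul_assoc]
      _ = 1 := by rw [Matrix.mul_nonsing_inv _ hu, Matrix.nonsing_inv_mul _ hu, Matrix.one_mul]
  have quad : ∀ y : Fin k → ℝ, (B *ᵥ y) ⬝ᵥ (S⁻¹ *ᵥ (B *ᵥ y)) = y ⬝ᵥ y := by
    intro y
    rw [mulVec_mulVec, dotProduct_mulVec, ← mulVec_transpose, transpose_mul, hBt, hSinvT,
      mulVec_mulVec, hBSB, one_mulVec]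
  have lin : ∀ y : Fin k → ℝ, t ⬝ᵥ (B *ᵥ y) = (B *ᵥ t) ⬝ᵥ y := by
    intro y; rw [dotProduct_mulVec, ← mulVec_transpose, hBt]
  have ss : (B *ᵥ t) ⬝ᵥ (B *ᵥ t) = t ⬝ᵥ (S *ᵥ t) := by
    rw [dotProduct_mulVec, ← mulVec_transpose, hBt, mulVec_mulVec, hBB, dotProduct_comm]
  have hgc : Continuous fun x : Fin k → ℝ =>
      rexp (-((x - μ) ⬝ᵥ (S⁻¹ *ᵥ (x - μ))) / 2) / Z := by
    apply Continuous.div_const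
    apply Real.continuous_exp.comp
    apply Continuous.div_const
    apply Continuous.neg
    exact cont_dot (continuous_id.sub continuous_const)
      ((cont_mulVec S⁻¹).comp (continuous_id.sub continuous_const))
  have hnn : ∀ x : Fin k → ℝ, 0 ≤ rexp (-((x - μ) ⬝ᵥ (S⁻¹ *ᵥ (x - μ))) / 2) / Z := by
    intro x; positivity
  have hmeas : Measurable fun x : Fin k → ℝ =>
      Real.toNNReal (rexp (-((x - μ) ⬝ᵥ (S⁻¹ *ᵥ (x - μ))) / 2) / Z) :=
    hgc.measurable.real_toNNReal
  have hmeq : multivariateGaussian μ S = volume.withDensity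
      (fun x => ((Real.toNNReal (rexp (-((x - μ) ⬝ᵥ (S⁻¹ *ᵥ (x - μ))) / 2) / Z) : ℝ≥0)
        : ℝ≥0∞)) := rfl
  rw [hmeq, integral_withDensity_eq_integral_smul hmeas]
  simp_rw [NNReal.smul_def, fun x => Real.coe_toNNReal _ (hnn x), smul_eq_mul]
  rw [← integral_add_left_eq_self
    (fun x => rexp (-((x - μ) ⬝ᵥ (S⁻¹ *ᵥ (x - μ))) / 2) / Z * rexp (t ⬝ᵥ x)) μ]
  simp only [add_sub_cancel_left]
  have hFc : Continuous fun u : Fin k → ℝ =>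
      rexp (-(u ⬝ᵥ (S⁻¹ *ᵥ u)) / 2) / Z * rexp (t ⬝ᵥ (μ + u)) := by
    apply Continuous.mul
    · apply Continuous.div_const
      apply Real.continuous_exp.comp
      apply Continuous.div_const
      apply Continuous.neg
      exact cont_dot continuous_id (cont_mulVec S⁻¹)
    · exact Real.continuous_exp.comp
        (cont_dot continuous_const (continuous_const.add continuous_id))
  rw [integral_comp_mulVec hdetB0 hFc]
  simp_rw [quad, dotProduct_add, lin]
  have hpt2 : ∀ y : Fin k → ℝ, rexp (-(y ⬝ᵥ y) / 2) / Z
        * rexp (t ⬝ᵥ μ + (B *ᵥ t) ⬝ᵥ y)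
      = (rexp (t ⬝ᵥ μ) / Z) * rexp ((B *ᵥ t) ⬝ᵥ y - y ⬝ᵥ y / 2) := by
    intro y
    rw [div_mul_eq_mul_div, div_mul_eq_mul_div, ← Real.exp_add, ← Real.exp_add]
    ring_nf
  simp_rw [hpt2]
  rw [integral_const_mul, gaussK, ss]
  have hZsplit : Z = Real.sqrt ((2 * π) ^ k) * |B.det| := by
    rw [hZdef, ← hdetB, Real.sqrt_mul (by positivity), Real.sqrt_mul_self_eq_abs]
  have h2pi : (0:ℝ) < Real.sqrt ((2 * π) ^ k) := Real.sqrt_pos.2 (by positivity)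
  rw [hZsplit, Real.exp_add]
  have habs : |B.det| ≠ 0 := abs_ne_zero.2 hdetB0
  field_simp

/-- One-step exponential-utility optimization: the function
`v ↦ ∫ -A exp(-cW (R + ⟨v, x - r·𝟏⟩)) dN_k(μ,Σ)(x)` attains its supremum, uniquely at
`v* = (cW)⁻¹ Σ⁻¹ (μ - r·𝟏)`, with maximal value
`-A exp(-cWR - (1/2)(μ - r·𝟏)ᵀ Σ⁻¹ (μ - r·𝟏))`. -/
theorem one_step_exponential_utility_max {k : ℕ} (μ : Fin k → ℝ)
    (S : Matrix (Fin k) (Fin k) ℝ) (hS : S.PosDef)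
    (A c W R r : ℝ) (hA : 0 < A) (hc : 0 < c) (hW : 0 < W)
    (f : (Fin k → ℝ) → ℝ)
    (hf : ∀ v, f v = ∫ x, -A * Real.exp (-(c * W) * (R + v ⬝ᵥ (x - r • (1 : Fin k → ℝ))))
      ∂(multivariateGaussian μ S))
    (vstar : Fin k → ℝ)
    (hvstar : vstar = (c * W)⁻¹ • (S⁻¹ *ᵥ (μ - r • (1 : Fin k → ℝ)))) :
    (∀ v, f v ≤ f vstar) ∧ (∀ v, f v = f vstar → v = vstar) ∧
      f vstar = -A * Real.exp (-(c * W * R) -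
        (μ - r • (1 : Fin k → ℝ)) ⬝ᵥ (S⁻¹ *ᵥ (μ - r • (1 : Fin k → ℝ))) / 2) := by
  set m : Fin k → ℝ := μ - r • (1 : Fin k → ℝ) with hm
  set κ := c * W with hκ
  have hκ0 : 0 < κ := mul_pos hc hW
  have hdetS : 0 < S.det := hS.det_pos
  have hu : IsUnit S.det := isUnit_iff_ne_zero.2 hdetS.ne'
  have hSt : Sᵀ = S := by
    rw [← Matrix.conjTranspose_eq_transpose_of_trivial]; exact hS.1
  have hsym : ∀ x y : Fin k → ℝ, x ⬝ᵥ (S *ᵥ y) = y ⬝ᵥ (S *ᵥ x) := by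
    intro x y; rw [dotProduct_mulVec, ← mulVec_transpose, hSt, dotProduct_comm]
  have hSv : S *ᵥ vstar = κ⁻¹ • m := by
    rw [hvstar, mulVec_smul, mulVec_mulVec, Matrix.mul_nonsing_inv _ hu, one_mulVec]
  set q := m ⬝ᵥ (S⁻¹ *ᵥ m) with hq
  have hvm : vstar ⬝ᵥ m = κ⁻¹ * q := by
    rw [hvstar, smul_dotProduct, smul_eq_mul, dotProduct_comm]
  have hvSv : vstar ⬝ᵥ (S *ᵥ vstar) = κ⁻¹ * (κ⁻¹ * q) := by
    rw [hSv, dotProduct_smul, smul_eq_mul, hvm]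
  have key : ∀ v, f v
      = -A * rexp (-(κ * R) + (-(κ * (v ⬝ᵥ m)) + κ ^ 2 * (v ⬝ᵥ (S *ᵥ v)) / 2)) := by
    intro v
    rw [hf v]
    have hpt : ∀ x, -A * rexp (-κ * (R + v ⬝ᵥ (x - r • (1 : Fin k → ℝ))))
        = (-A * rexp (-(κ * R) + κ * (r * (v ⬝ᵥ (1 : Fin k → ℝ)))))
          * rexp (((-κ) • v) ⬝ᵥ x) := by
      intro x
      rw [mul_assoc, ← Real.exp_add, dotProduct_sub, dotProduct_smul, smul_dotProduct]
      congr 2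
      simp only [smul_eq_mul]
      ring
    simp_rw [hpt]
    rw [integral_const_mul, mgf μ S hS ((-κ) • v)]
    simp_rw [smul_dotProduct, mulVec_smul, dotProduct_smul, smul_eq_mul]
    rw [mul_assoc, ← Real.exp_add]
    have hvmm : v ⬝ᵥ m = v ⬝ᵥ μ - r * (v ⬝ᵥ (1 : Fin k → ℝ)) := by
      rw [hm, dotProduct_sub, dotProduct_smul, smul_eq_mul]
    congr 2
    rw [hvmm]
    ring
  have hdiff : ∀ v, (-(κ * (v ⬝ᵥ m)) + κ ^ 2 * (v ⬝ᵥ (S *ᵥ v)) / 2)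
      - (-(κ * (vstar ⬝ᵥ m)) + κ ^ 2 * (vstar ⬝ᵥ (S *ᵥ vstar)) / 2)
      = κ ^ 2 * ((v - vstar) ⬝ᵥ (S *ᵥ (v - vstar))) / 2 := by
    intro v
    have e1 : (v - vstar) ⬝ᵥ (S *ᵥ (v - vstar)) = v ⬝ᵥ (S *ᵥ v) - v ⬝ᵥ (S *ᵥ vstar)
        - vstar ⬝ᵥ (S *ᵥ v) + vstar ⬝ᵥ (S *ᵥ vstar) := by
      rw [mulVec_sub, sub_dotProduct, dotProduct_sub, dotProduct_sub]
      ring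
    have e2 : v ⬝ᵥ (S *ᵥ vstar) = κ⁻¹ * (v ⬝ᵥ m) := by
      rw [hSv, dotProduct_smul, smul_eq_mul]
    have e3 : vstar ⬝ᵥ (S *ᵥ v) = κ⁻¹ * (v ⬝ᵥ m) := by rw [hsym, e2]
    rw [e1, e2, e3, hvSv, hvm]
    field_simp
    ring
  refine ⟨?_, ?_, ?_⟩
  · intro v
    rw [key v, key vstar]
    have h1 : 0 ≤ (v - vstar) ⬝ᵥ (S *ᵥ (v - vstar)) := by
      have := hS.posSemidef.dotProduct_mulVec_nonneg (v - vstar)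
      simpa using this
    have hexp : rexp (-(κ * R) + (-(κ * (vstar ⬝ᵥ m)) + κ ^ 2 * (vstar ⬝ᵥ (S *ᵥ vstar)) / 2))
        ≤ rexp (-(κ * R) + (-(κ * (v ⬝ᵥ m)) + κ ^ 2 * (v ⬝ᵥ (S *ᵥ v)) / 2)) := by
      apply Real.exp_le_exp.2
      nlinarith [hdiff v]
    exact mul_le_mul_of_nonpos_left hexp (by linarith)
  · intro v hveq
    rw [key v, key vstar] at hveq
    have hA0 : (-A) ≠ 0 := by simp [hA.ne']
    have hE := Real.exp_eq_exp.1 (mul_left_cancel₀ hA0 hveq)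
    have hz : κ ^ 2 * ((v - vstar) ⬝ᵥ (S *ᵥ (v - vstar))) / 2 = 0 := by
      rw [← hdiff v]; linarith
    have hz2 : (v - vstar) ⬝ᵥ (S *ᵥ (v - vstar)) = 0 := by
      have hκ2 : κ ^ 2 ≠ 0 := by positivity
      have h2 : κ ^ 2 * ((v - vstar) ⬝ᵥ (S *ᵥ (v - vstar))) = 0 := by linarith
      exact (mul_eq_zero.1 h2).resolve_left hκ2
    by_contra hne
    have hd0 : v - vstar ≠ 0 := sub_ne_zero.2 hne
    have hpos := hS.dotProduct_mulVec_pos hd0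
    simp only [star_trivial] at hpos
    linarith [hz2 ▸ hpos]
  · rw [key vstar]
    congr 2
    rw [hvSv, hvm]
    field_simp
    ring
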